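/- Let the symmetric group S₄ act by conjugation on the 6-element set T of transpositions and on the 3-element set D of double transpositions, and in the standard way on Fin 4. Then there is an isomorphism of complex representations of S₄: (trivial 1-dimensional representation ℂ) ⊕ ℂ[T] ≅ ℂ[D] ⊕ ℂ[Fin 4], where ℂ[X] denotes the complex permutation representation associated to a finite S₄-set X (e.g. Rep.ofMulAction ℂ S₄ X). -/

import Mathlib

open CategoryTheory Limits

/-- A double transposition in `S₄`: a fixed-point-free permutation of order 2,
i.e. a product of two disjoint transpositions. -/
def IsDoubleTransposition (d : Equiv.Perm (Fin 4)) : Prop :=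
  orderOf d = 2 ∧ ∀ x, d x ≠ x

/-- The (6-element) set of transpositions in `S₄`. -/
abbrev Transpositions : Type := {t : Equiv.Perm (Fin 4) // t.IsSwap}

/-- The (3-element) set of double transpositions in `S₄`. -/
abbrev DoubleTranspositions : Type := {d : Equiv.Perm (Fin 4) // IsDoubleTransposition d}

lemma isSwap_conj {σ t : Equiv.Perm (Fin 4)} (ht : t.IsSwap) : (σ * t * σ⁻¹).IsSwap := by
  obtain ⟨x, y, hxy, rfl⟩ := ht
  exact ⟨σ x, σ y, fun h => hxy (σ.injective h), (Equiv.swap_apply_apply σ x y).symm⟩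

lemma isDoubleTransposition_conj {σ d : Equiv.Perm (Fin 4)}
    (hd : IsDoubleTransposition d) : IsDoubleTransposition (σ * d * σ⁻¹) := by
  obtain ⟨h2, hfix⟩ := hd
  constructor
  · have h : σ * d * σ⁻¹ = (MulAut.conj σ).toMonoidHom d := rfl
    rw [h, orderOf_injective (MulAut.conj σ).toMonoidHom
      (MulEquiv.injective (MulAut.conj σ)) d]
    exact h2
  · intro x h
    apply hfix (σ⁻¹ x)
    have := congrArg (⇑σ⁻¹) h
    simpa using this

/-- `S₄` acts on the set of transpositions by conjugation. -/
instance : MulAction (Equiv.Perm (Fin 4)) Transpositions where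
  smul σ t := ⟨σ * t.1 * σ⁻¹, isSwap_conj t.2⟩
  one_smul t := by
    apply Subtype.ext
    show 1 * t.1 * 1⁻¹ = t.1
    group
  mul_smul σ τ t := by
    apply Subtype.ext
    show (σ * τ) * t.1 * (σ * τ)⁻¹ = σ * (τ * t.1 * τ⁻¹) * σ⁻¹
    group

/-- `S₄` acts on the set of double transpositions by conjugation. -/
instance : MulAction (Equiv.Perm (Fin 4)) DoubleTranspositions where
  smul σ d := ⟨σ * d.1 * σ⁻¹, isDoubleTransposition_conj d.2⟩
  one_smul d := by
    apply Subtype.ext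
    show 1 * d.1 * 1⁻¹ = d.1
    group
  mul_smul σ τ d := by
    apply Subtype.ext
    show (σ * τ) * d.1 * (σ * τ)⁻¹ = σ * (τ * d.1 * τ⁻¹) * σ⁻¹
    group

/-! ### Auxiliary material -/

namespace RecillasAux

abbrev G4 : Type := Equiv.Perm (Fin 4)

instance : DecidablePred (Equiv.Perm.IsSwap (α := Fin 4)) := fun t =>
  decidable_of_iff (∃ x y, x ≠ y ∧ t = Equiv.swap x y) Iff.rfl

instance : Fintype Transpositions :=
  Fintype.subtype
    ({Equiv.swap 0 1, Equiv.swap 0 2, Equiv.swap 0 3,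
      Equiv.swap 1 2, Equiv.swap 1 3, Equiv.swap 2 3} : Finset (Equiv.Perm (Fin 4))) (by
    intro f
    constructor
    · intro hf
      simp only [Finset.mem_insert, Finset.mem_singleton] at hf
      rcases hf with rfl|rfl|rfl|rfl|rfl|rfl <;> exact ⟨_, _, by decide, rfl⟩
    · rintro ⟨x, y, hxy, rfl⟩
      revert hxy
      revert y
      revert x
      decide)

instance : Fintype DoubleTranspositions :=
  Fintype.subtype
    ({Equiv.swap 0 1 * Equiv.swap 2 3, Equiv.swap 0 2 * Equiv.swap 1 3,
      Equiv.swap 0 3 * Equiv.swap 1 2} : Finset (Equiv.Perm (Fin 4))) (by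
    intro f
    constructor
    · intro hf
      simp only [Finset.mem_insert, Finset.mem_singleton] at hf
      rcases hf with rfl|rfl|rfl <;>
        exact ⟨orderOf_eq_prime (by decide) (by decide), by decide⟩
    · rintro ⟨h2, hfix⟩
      have h1 : f * f = 1 := by
        have := pow_orderOf_eq_one f
        rw [h2] at this
        rwa [pow_two] at this
      have hsq : ∀ x, f (f x) = x := by
        intro x
        have : (f * f) x = (1 : Equiv.Perm (Fin 4)) x := by rw [h1]
        simpa [Equiv.Perm.mul_apply] using this
      have key : ∀ g : Fin 4 → Fin 4, (∀ x, g (g x) = x) → (∀ x, g x ≠ x) →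
          ((∀ x, g x = (Equiv.swap 0 1 * Equiv.swap 2 3 : Equiv.Perm (Fin 4)) x) ∨
           (∀ x, g x = (Equiv.swap 0 2 * Equiv.swap 1 3 : Equiv.Perm (Fin 4)) x) ∨
           (∀ x, g x = (Equiv.swap 0 3 * Equiv.swap 1 2 : Equiv.Perm (Fin 4)) x)) := by
        set_option maxRecDepth 10000 in decide
      rcases key (⇑f) hsq hfix with h|h|h <;>
        [skip; skip; skip] <;>
        · have hf : f = _ := Equiv.ext h
          rw [hf]
          simp)

/-- A morphism between permutation representations given by an equivariant `ℚ`-matrix. -/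
noncomputable def homOfMatrix {X Y : Type} [Fintype Y] [MulAction G4 X] [MulAction G4 Y]
    (M : X → Y → ℤ) (hM : ∀ (g : G4) (x : X) (y : Y), M (g • x) (g • y) = M x y) :
    Rep.ofMulAction ℂ G4 X ⟶ Rep.ofMulAction ℂ G4 Y :=
  Rep.ofHom ⟨Finsupp.lift (MonoidAlgebra ℂ Y) ℂ X
      (fun x => ∑ y, (M x y : ℂ) • MonoidAlgebra.single y 1) ∘ₗ
      (MonoidAlgebra.coeffLinearEquiv ℂ).toLinearMap, fun g => by
    let σ : G4 := g
    refine MonoidAlgebra.lhom_ext' fun x => LinearMap.ext_ring ?_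
    simp only [LinearMap.comp_apply, MonoidAlgebra.lsingle_apply]
    rw [Representation.ofMulAction_single (G := G4) (g := σ)]
    show Finsupp.lift (MonoidAlgebra ℂ Y) ℂ X _ (Finsupp.single (σ • x) 1)
      = Representation.ofMulAction ℂ G4 Y σ (Finsupp.lift (MonoidAlgebra ℂ Y) ℂ X _ (Finsupp.single x 1))
    rw [Finsupp.lift_apply, Finsupp.lift_apply]
    rw [Finsupp.sum_single_index (by simp), Finsupp.sum_single_index (by simp)]
    rw [map_smul, map_sum]
    congr 1
    refine (Fintype.sum_bijective (σ • ·) (MulAction.bijective σ)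
      (fun y => ((Rep.ofMulAction ℂ G4 Y).ρ σ) ((M x y : ℂ) • MonoidAlgebra.single y 1))
      (fun y => (M (σ • x) y : ℂ) • MonoidAlgebra.single y 1) (fun y => ?_)).symm
    dsimp only
    rw [map_smul, hM σ x y]
    congr 1
    exact Representation.ofMulAction_single (G := G4) (g := σ) _ _⟩

lemma lift_single {X Y : Type} [Fintype Y] [MulAction G4 X] [MulAction G4 Y]
    (M : X → Y → ℤ) (hM : ∀ (g : G4) (x : X) (y : Y), M (g • x) (g • y) = M x y)
    (x : X) (c : ℂ) :
    (homOfMatrix M hM).hom (MonoidAlgebra.single x c)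
      = c • ∑ y, (M x y : ℂ) • MonoidAlgebra.single y 1 := by
  show Finsupp.lift (MonoidAlgebra ℂ Y) ℂ X _ (Finsupp.single x c) = _
  rw [Finsupp.lift_apply, Finsupp.sum_single_index (by simp)]

lemma rep_hom_ext' {X Y : Type} [MulAction G4 X] [MulAction G4 Y]
    (f g : Rep.ofMulAction ℂ G4 X ⟶ Rep.ofMulAction ℂ G4 Y)
    (h : ∀ x c, f.hom (MonoidAlgebra.single x c) = g.hom (MonoidAlgebra.single x c)) :
    f = g := by
  apply Rep.hom_ext
  apply Representation.IntertwiningMap.ext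
  exact MonoidAlgebra.lhom_ext' fun x => LinearMap.ext fun c => h x c

lemma homOfMatrix_comp {X Y Z : Type} [Fintype Y] [Fintype Z]
    [MulAction G4 X] [MulAction G4 Y] [MulAction G4 Z]
    (M : X → Y → ℤ) (N : Y → Z → ℤ)
    (hM : ∀ (g : G4) (x : X) (y : Y), M (g • x) (g • y) = M x y)
    (hN : ∀ (g : G4) (y : Y) (z : Z), N (g • y) (g • z) = N y z) :
    homOfMatrix M hM ≫ homOfMatrix N hN =
      homOfMatrix (fun x z => ∑ y, M x y * N y z)
        (fun g x z => (Fintype.sum_bijective (g • ·) (MulAction.bijective g)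
          (fun y => M x y * N y z) (fun y => M (g • x) y * N y (g • z))
          (fun y => by rw [hM, hN])).symm) := by
  refine rep_hom_ext' _ _ fun x c => ?_
  show (homOfMatrix N hN).hom ((homOfMatrix M hM).hom (MonoidAlgebra.single x c)) = _
  rw [lift_single, lift_single, map_smul, map_sum]
  congr 1
  refine Eq.trans (Finset.sum_congr rfl fun y _ => by rw [map_smul, lift_single, one_smul]) ?_
  push_cast
  simp only [Finset.smul_sum, smul_smul, Finset.sum_smul]
  rw [Finset.sum_comm]

lemma homOfMatrix_add {X Y : Type} [Fintype Y] [MulAction G4 X] [MulAction G4 Y]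
    (M N : X → Y → ℤ)
    (hM : ∀ (g : G4) (x : X) (y : Y), M (g • x) (g • y) = M x y)
    (hN : ∀ (g : G4) (x : X) (y : Y), N (g • x) (g • y) = N x y) :
    homOfMatrix M hM + homOfMatrix N hN =
      homOfMatrix (fun x y => M x y + N x y) (fun g x y => by rw [hM, hN]) := by
  refine rep_hom_ext' _ _ fun x c => ?_
  show (homOfMatrix M hM).hom (MonoidAlgebra.single x c)
    + (homOfMatrix N hN).hom (MonoidAlgebra.single x c) = _
  rw [lift_single, lift_single, lift_single]
  push_cast
  simp [add_smul, Finset.sum_add_distrib, smul_add]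

lemma homOfMatrix_eq_two_smul_one {X : Type} [Fintype X] [DecidableEq X] [MulAction G4 X]
    (M : X → X → ℤ) (hM : ∀ (g : G4) (x : X) (y : X), M (g • x) (g • y) = M x y)
    (h : ∀ x z, M x z = if z = x then 2 else 0) :
    homOfMatrix M hM = (2 : ℂ) • 𝟙 (Rep.ofMulAction ℂ G4 X) := by
  refine rep_hom_ext' _ _ fun x c => ?_
  rw [lift_single]
  show (c • ∑ y, ((M x y : ℂ)) • MonoidAlgebra.single y 1) = (2 : ℂ) • MonoidAlgebra.single x c
  simp only [h, apply_ite (fun q : ℤ => (q : ℂ)), Int.cast_ofNat, Int.cast_zero, ite_smul,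
    zero_smul]
  rw [Finset.sum_ite_eq' Finset.univ x (fun z => (2 : ℂ) • MonoidAlgebra.single z (1 : ℂ))]
  simp [MonoidAlgebra.smul_single, smul_smul, mul_comm]

lemma homOfMatrix_eq_zero {X Y : Type} [Fintype Y] [MulAction G4 X] [MulAction G4 Y]
    (M : X → Y → ℤ) (hM : ∀ (g : G4) (x : X) (y : Y), M (g • x) (g • y) = M x y)
    (h : ∀ x z, M x z = 0) :
    homOfMatrix M hM = 0 := by
  refine rep_hom_ext' _ _ fun x c => ?_
  rw [lift_single]
  show _ = (0 : MonoidAlgebra ℂ Y)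
  simp [h]

/-! matrices -/

def MA11 : PUnit → DoubleTranspositions → ℤ := fun _ _ => 1
def MA21 : PUnit → Fin 4 → ℤ := fun _ _ => 1
def MA12 : Transpositions → DoubleTranspositions → ℤ :=
  fun t d => if t.1 * d.1 = d.1 * t.1 then 1 else 0
def MA22 : Transpositions → Fin 4 → ℤ := fun t p => if t.1 p = p then 0 else 1
def MB11 : DoubleTranspositions → PUnit → ℤ := fun _ _ => 2
def MB12 : Fin 4 → PUnit → ℤ := fun _ _ => -1
def MB21 : DoubleTranspositions → Transpositions → ℤ :=
  fun d t => if t.1 * d.1 = d.1 * t.1 then 0 else -1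
def MB22 : Fin 4 → Transpositions → ℤ := fun p t => if t.1 p = p then 0 else 1

lemma conj_comm_iff (σ a b : G4) :
    (σ * a * σ⁻¹) * (σ * b * σ⁻¹) = (σ * b * σ⁻¹) * (σ * a * σ⁻¹) ↔ a * b = b * a := by
  rw [show (σ * a * σ⁻¹) * (σ * b * σ⁻¹) = σ * (a * b) * σ⁻¹ by group,
      show (σ * b * σ⁻¹) * (σ * a * σ⁻¹) = σ * (b * a) * σ⁻¹ by group]
  constructor
  · intro h
    exact mul_left_cancel (mul_right_cancel h)
  · intro h
    rw [h]

lemma conj_fix_iff (σ t : G4) (p : Fin 4) : (σ * t * σ⁻¹) (σ p) = σ p ↔ t p = p := by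
  simp [Equiv.Perm.mul_apply]

lemma hMA11 : ∀ (g : G4) (x : PUnit) (y : DoubleTranspositions),
    MA11 (g • x) (g • y) = MA11 x y := fun _ _ _ => rfl
lemma hMA21 : ∀ (g : G4) (x : PUnit) (y : Fin 4),
    MA21 (g • x) (g • y) = MA21 x y := fun _ _ _ => rfl
lemma hMB11 : ∀ (g : G4) (x : DoubleTranspositions) (y : PUnit),
    MB11 (g • x) (g • y) = MB11 x y := fun _ _ _ => rfl
lemma hMB12 : ∀ (g : G4) (x : Fin 4) (y : PUnit),
    MB12 (g • x) (g • y) = MB12 x y := fun _ _ _ => rfl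
lemma hMA12 : ∀ (g : G4) (t : Transpositions) (d : DoubleTranspositions),
    MA12 (g • t) (g • d) = MA12 t d := fun g t d =>
  if_congr (conj_comm_iff g t.1 d.1) rfl rfl
lemma hMB21 : ∀ (g : G4) (d : DoubleTranspositions) (t : Transpositions),
    MB21 (g • d) (g • t) = MB21 d t := fun g d t =>
  if_congr (conj_comm_iff g t.1 d.1) rfl rfl
lemma hMA22 : ∀ (g : G4) (t : Transpositions) (p : Fin 4),
    MA22 (g • t) (g • p) = MA22 t p := fun g t p => by
  show (if (g * t.1 * g⁻¹) (g p) = g p then (0 : ℤ) else 1) = _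
  exact if_congr (conj_fix_iff g t.1 p) rfl rfl
lemma hMB22 : ∀ (g : G4) (p : Fin 4) (t : Transpositions),
    MB22 (g • p) (g • t) = MB22 p t := fun g p t => by
  show (if (g * t.1 * g⁻¹) (g p) = g p then (0 : ℤ) else 1) = _
  exact if_congr (conj_fix_iff g t.1 p) rfl rfl

/-! the two mutually inverse morphisms -/

noncomputable def φ :
    Rep.ofMulAction ℂ G4 PUnit ⊞ Rep.ofMulAction ℂ G4 Transpositions ⟶
      Rep.ofMulAction ℂ G4 DoubleTranspositions ⊞ Rep.ofMulAction ℂ G4 (Fin 4) :=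
  biprod.desc (biprod.lift (homOfMatrix MA11 hMA11) (homOfMatrix MA21 hMA21))
    (biprod.lift (homOfMatrix MA12 hMA12) (homOfMatrix MA22 hMA22))

noncomputable def ψ :
    Rep.ofMulAction ℂ G4 DoubleTranspositions ⊞ Rep.ofMulAction ℂ G4 (Fin 4) ⟶
      Rep.ofMulAction ℂ G4 PUnit ⊞ Rep.ofMulAction ℂ G4 Transpositions :=
  biprod.desc (biprod.lift (homOfMatrix MB11 hMB11) (homOfMatrix MB21 hMB21))
    (biprod.lift (homOfMatrix MB12 hMB12) (homOfMatrix MB22 hMB22))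

set_option maxRecDepth 40000 in
lemma E1 : homOfMatrix MA11 hMA11 ≫ homOfMatrix MB11 hMB11
    + homOfMatrix MA21 hMA21 ≫ homOfMatrix MB12 hMB12 = (2 : ℂ) • 𝟙 (Rep.ofMulAction ℂ G4 PUnit) := by
  rw [homOfMatrix_comp, homOfMatrix_comp, homOfMatrix_add]
  exact homOfMatrix_eq_two_smul_one _ _ (by decide)

set_option maxRecDepth 40000 in
lemma E2 : homOfMatrix MA11 hMA11 ≫ homOfMatrix MB21 hMB21
    + homOfMatrix MA21 hMA21 ≫ homOfMatrix MB22 hMB22 = 0 := by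
  rw [homOfMatrix_comp, homOfMatrix_comp, homOfMatrix_add]
  exact homOfMatrix_eq_zero _ _ (by decide)

set_option maxRecDepth 40000 in
lemma E3 : homOfMatrix MA12 hMA12 ≫ homOfMatrix MB11 hMB11
    + homOfMatrix MA22 hMA22 ≫ homOfMatrix MB12 hMB12 = 0 := by
  rw [homOfMatrix_comp, homOfMatrix_comp, homOfMatrix_add]
  exact homOfMatrix_eq_zero _ _ (by decide)

set_option maxRecDepth 40000 in
lemma E4 : homOfMatrix MA12 hMA12 ≫ homOfMatrix MB21 hMB21
    + homOfMatrix MA22 hMA22 ≫ homOfMatrix MB22 hMB22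
    = (2 : ℂ) • 𝟙 (Rep.ofMulAction ℂ G4 Transpositions) := by
  rw [homOfMatrix_comp, homOfMatrix_comp, homOfMatrix_add]
  exact homOfMatrix_eq_two_smul_one _ _ (by decide)

set_option maxRecDepth 40000 in
lemma E5 : homOfMatrix MB11 hMB11 ≫ homOfMatrix MA11 hMA11
    + homOfMatrix MB21 hMB21 ≫ homOfMatrix MA12 hMA12
    = (2 : ℂ) • 𝟙 (Rep.ofMulAction ℂ G4 DoubleTranspositions) := by
  rw [homOfMatrix_comp, homOfMatrix_comp, homOfMatrix_add]
  exact homOfMatrix_eq_two_smul_one _ _ (by decide)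

set_option maxRecDepth 40000 in
lemma E6 : homOfMatrix MB11 hMB11 ≫ homOfMatrix MA21 hMA21
    + homOfMatrix MB21 hMB21 ≫ homOfMatrix MA22 hMA22 = 0 := by
  rw [homOfMatrix_comp, homOfMatrix_comp, homOfMatrix_add]
  exact homOfMatrix_eq_zero _ _ (by decide)

set_option maxRecDepth 40000 in
lemma E7 : homOfMatrix MB12 hMB12 ≫ homOfMatrix MA11 hMA11
    + homOfMatrix MB22 hMB22 ≫ homOfMatrix MA12 hMA12 = 0 := by
  rw [homOfMatrix_comp, homOfMatrix_comp, homOfMatrix_add]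
  exact homOfMatrix_eq_zero _ _ (by decide)

set_option maxRecDepth 40000 in
lemma E8 : homOfMatrix MB12 hMB12 ≫ homOfMatrix MA21 hMA21
    + homOfMatrix MB22 hMB22 ≫ homOfMatrix MA22 hMA22
    = (2 : ℂ) • 𝟙 (Rep.ofMulAction ℂ G4 (Fin 4)) := by
  rw [homOfMatrix_comp, homOfMatrix_comp, homOfMatrix_add]
  exact homOfMatrix_eq_two_smul_one _ _ (by decide)

lemma φψ : φ ≫ ψ = (2 : ℂ) • 𝟙 _ := by
  unfold φ ψ
  apply biprod.hom_ext' <;> apply biprod.hom_ext <;>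
    simp only [biprod.inl_desc_assoc, biprod.inr_desc_assoc, biprod.lift_desc, Category.assoc,
      Preadditive.add_comp, biprod.lift_fst, biprod.lift_snd, Category.comp_id, Category.id_comp,
      biprod.inl_fst, biprod.inl_snd, biprod.inr_fst, biprod.inr_snd, smul_zero,
      Linear.comp_smul, Linear.smul_comp, Category.comp_id]
  · exact E1
  · exact E2
  · exact E3
  · exact E4

lemma ψφ : ψ ≫ φ = (2 : ℂ) • 𝟙 _ := by
  unfold φ ψ
  apply biprod.hom_ext' <;> apply biprod.hom_ext <;>
    simp only [biprod.inl_desc_assoc, biprod.inr_desc_assoc, biprod.lift_desc, Category.assoc,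
      Preadditive.add_comp, biprod.lift_fst, biprod.lift_snd, Category.comp_id, Category.id_comp,
      biprod.inl_fst, biprod.inl_snd, biprod.inr_fst, biprod.inr_snd, smul_zero,
      Linear.comp_smul, Linear.smul_comp, Category.comp_id]
  · exact E5
  · exact E6
  · exact E7
  · exact E8

/-! the trivial representation is the permutation representation of a point -/

noncomputable def eU : ℂ ≃ₗ[ℂ] (PUnit.{1} →₀ ℂ) where
  toFun c := Finsupp.single PUnit.unit c
  map_add' a b := Finsupp.single_add _ _ _
  map_smul' a b := by simp [Finsupp.smul_single]
  invFun f := f PUnit.unit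
  left_inv c := Finsupp.single_eq_same
  right_inv f := by
    refine Finsupp.ext fun u => ?_
    cases u
    exact Finsupp.single_eq_same

noncomputable def trivIso : Rep.trivial ℂ G4 ℂ ≅ Rep.ofMulAction ℂ G4 PUnit :=
  (Rep.ofMulActionSubsingletonIsoTrivial ℂ G4 PUnit).symm

end RecillasAux

/-- The Recillas identity of complex representations of `S₄`:
`ℂ ⊕ ℂ[T] ≅ ℂ[D] ⊕ ℂ[Fin 4]`, where `T` is the set of transpositions and `D` the set of
double transpositions, both with the conjugation action, and `Fin 4` carries the standard
action. -/
theorem recillas_representation_iso :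
    Nonempty
      (Rep.trivial ℂ (Equiv.Perm (Fin 4)) ℂ ⊞
          Rep.ofMulAction ℂ (Equiv.Perm (Fin 4)) Transpositions ≅
        Rep.ofMulAction ℂ (Equiv.Perm (Fin 4)) DoubleTranspositions ⊞
          Rep.ofMulAction ℂ (Equiv.Perm (Fin 4)) (Fin 4)) :=
  ⟨(biprod.mapIso RecillasAux.trivIso (Iso.refl _)) ≪≫
    ⟨RecillasAux.φ, (2 : ℂ)⁻¹ • RecillasAux.ψ, by
      rw [Linear.comp_smul, RecillasAux.φψ, smul_smul]
      norm_num, by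
      rw [Linear.smul_comp, RecillasAux.ψφ, smul_smul]
      norm_num⟩⟩
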